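/- Let r ≥ 2 and m ≥ 2 be integers. Let S ⊆ A(r,m) be a pierced simplex, and for each l ∈ {1,…,r} let t_l > 0 be such that t_l·e_l ∈ conv(S). If i ∈ {1,…,r} is such that t_i = min{t_1,…,t_r}, then every point x ∈ C_i \ L_r lies strictly above S, i.e., ∑_{l=1}^r x_l/t_l > 1; in particular, the point t_i·e_i is an element of S. -/

import Mathlib

/-- The point `a_{i,j,k}` of the construction `A(r,m)` (indices `i,j,k` are 1-based). -/
noncomputable def pt (r m i j k : ℕ) : Fin r → ℝ := fun l =>
  if (l : ℕ) + 1 = i then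
    (∑ l' ∈ Finset.Icc (j + 1) r, (m : ℝ) ^ (2 * r - 2 * l' + 3))
      + ((r - j : ℕ) : ℝ) * (m : ℝ) + (k : ℝ)
  else if j + 1 ≤ (l : ℕ) + 1 then
    -((m : ℝ) ^ (2 * r - 2 * ((l : ℕ) + 1) + 3))
  else 0

/-- The point set `A(r,m) ⊆ ℝ^r`. -/
def Apts (r m : ℕ) : Set (Fin r → ℝ) :=
  {x | ∃ i j k : ℕ, 1 ≤ i ∧ i ≤ j ∧ j ≤ r ∧ 1 ≤ k ∧ k ≤ m ∧ x = pt r m i j k}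

/-- The set `C_i` of points of `A(r,m)` of color `i`. -/
def colorSet (r m i : ℕ) : Set (Fin r → ℝ) :=
  {x | ∃ j k : ℕ, 1 ≤ i ∧ i ≤ j ∧ j ≤ r ∧ 1 ≤ k ∧ k ≤ m ∧ x = pt r m i j k}

/-- The set `L_j` of points of `A(r,m)` of layer `j`. -/
def layerSet (r m j : ℕ) : Set (Fin r → ℝ) :=
  {x | ∃ i k : ℕ, 1 ≤ i ∧ i ≤ j ∧ j ≤ r ∧ 1 ≤ k ∧ k ≤ m ∧ x = pt r m i j k}

/-- A set `S ⊆ ℝ^r` is pierced if its convex hull meets the line `ℝ·1_r`. -/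
def Pierced {r : ℕ} (S : Set (Fin r → ℝ)) : Prop :=
  ∃ c : ℝ, (fun _ => c : Fin r → ℝ) ∈ convexHull ℝ S

/-- The `i`-th standard basis vector of `ℝ^r` (1-based index). -/
def stdVec (r i : ℕ) : Fin r → ℝ := fun l => if (l : ℕ) + 1 = i then 1 else 0

noncomputable def Pval (r m j k : ℕ) : ℝ :=
  (∑ l' ∈ Finset.Icc (j + 1) r, (m : ℝ) ^ (2 * r - 2 * l' + 3))
    + ((r - j : ℕ) : ℝ) * (m : ℝ) + (k : ℝ)

lemma pt_diag {r m c j k : ℕ} (c' : Fin r) (hc' : (c' : ℕ) + 1 = c) :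
    pt r m c j k c' = Pval r m j k := by simp [pt, Pval, hc']

lemma Pval_pos {r m j k : ℕ} (hk : 1 ≤ k) : 0 < Pval r m j k := by
  have h1 : (0:ℝ) ≤ ∑ l' ∈ Finset.Icc (j + 1) r, (m : ℝ) ^ (2 * r - 2 * l' + 3) :=
    Finset.sum_nonneg fun _ _ => by positivity
  have h2 : (0:ℝ) ≤ ((r - j : ℕ) : ℝ) * (m : ℝ) := by positivity
  have h3 : (1:ℝ) ≤ (k:ℝ) := by exact_mod_cast hk
  unfold Pval; linarith

lemma pt_offdiag {r m c j k : ℕ} (l : Fin r) (h : (l : ℕ) + 1 ≠ c) :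
    pt r m c j k l ≤ 0 := by
  simp only [pt, if_neg h]
  split
  · have : (0:ℝ) ≤ (m : ℝ) ^ (2 * r - 2 * ((l : ℕ) + 1) + 3) := by positivity
    linarith
  · exact le_refl 0

lemma pt_zero_of {r m c j k : ℕ} (l : Fin r) (h1 : (l : ℕ) + 1 ≠ c) (h2 : (l:ℕ) + 1 ≤ j) :
    pt r m c j k l = 0 := by
  have : ¬ (j + 1 ≤ (l:ℕ) + 1) := by omega
  simp [pt, h1, this]

lemma sum_pt_mul {r m c j k : ℕ} (w : Fin r → ℝ) (c' : Fin r) (hc' : (c' : ℕ) + 1 = c)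
    (hcj : c ≤ j) :
    ∑ p : Fin r, pt r m c j k p * w p
      = Pval r m j k * w c'
        - ∑ p ∈ Finset.univ.filter (fun p : Fin r => j ≤ (p : ℕ)),
            (m : ℝ) ^ (2 * r - 2 * ((p : ℕ) + 1) + 3) * w p := by
  have key : ∀ p : Fin r, pt r m c j k p * w p
      = (if p = c' then Pval r m j k * w p else 0)
        + (if j ≤ (p : ℕ) then -((m : ℝ) ^ (2 * r - 2 * ((p : ℕ) + 1) + 3) * w p) else 0) := by
    intro p
    by_cases h1 : (p : ℕ) + 1 = c
    · have hp : p = c' := Fin.ext (by omega)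
      have h2 : ¬ j ≤ (p : ℕ) := by omega
      rw [if_pos hp, if_neg h2, pt_diag p h1]
      ring
    · have hp : p ≠ c' := fun h => h1 (by rw [h]; exact hc')
      rw [if_neg hp]
      by_cases h2 : j ≤ (p : ℕ)
      · have h3 : j + 1 ≤ (p : ℕ) + 1 := by omega
        rw [if_pos h2]
        simp only [pt, if_neg h1, if_pos h3]
        ring
      · have h3 : ¬ (j + 1 ≤ (p : ℕ) + 1) := by omega
        rw [if_neg h2]
        simp only [pt, if_neg h1, if_neg h3]
        ring
  rw [Finset.sum_congr rfl (fun p _ => key p), Finset.sum_add_distrib,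
    Finset.sum_ite_eq' Finset.univ c' (fun p => Pval r m j k * w p)]
  simp only [Finset.mem_univ, if_pos]
  rw [← Finset.sum_filter, Finset.sum_neg_distrib]
  ring

lemma filter_image {r j : ℕ} (hjr : j ≤ r) :
    (Finset.univ.filter (fun p : Fin r => j ≤ (p : ℕ))).image (fun p : Fin r => (p : ℕ) + 1)
      = Finset.Icc (j + 1) r := by
  ext n
  simp only [Finset.mem_image, Finset.mem_filter, Finset.mem_univ, true_and, Finset.mem_Icc]
  constructor
  · rintro ⟨p, hp, rfl⟩
    exact ⟨by omega, by have := p.isLt; omega⟩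
  · rintro ⟨h1, h2⟩
    exact ⟨⟨n - 1, by omega⟩, by simp; omega, by simp; omega⟩

lemma sum_filter_pow {r j : ℕ} (hjr : j ≤ r) (f : ℕ → ℝ) :
    ∑ p ∈ Finset.univ.filter (fun p : Fin r => j ≤ (p : ℕ)), f ((p : ℕ) + 1)
      = ∑ l' ∈ Finset.Icc (j + 1) r, f l' := by
  rw [← filter_image hjr, Finset.sum_image]
  intro a _ b _ hab
  exact Fin.ext (Nat.add_right_cancel (m := 1) hab)

lemma sum_ge {r m c j k : ℕ} (c' : Fin r) (hc' : (c' : ℕ) + 1 = c) (hcj : c ≤ j)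
    (hjr : j ≤ r) (w : Fin r → ℝ) (hwmax : ∀ p, w p ≤ w c') :
    (((r - j : ℕ) : ℝ) * m + k) * w c' ≤ ∑ p : Fin r, pt r m c j k p * w p := by
  rw [sum_pt_mul w c' hc' hcj]
  have hb : ∑ p ∈ Finset.univ.filter (fun p : Fin r => j ≤ (p : ℕ)),
        (m : ℝ) ^ (2 * r - 2 * ((p : ℕ) + 1) + 3) * w p
      ≤ ∑ p ∈ Finset.univ.filter (fun p : Fin r => j ≤ (p : ℕ)),
        (m : ℝ) ^ (2 * r - 2 * ((p : ℕ) + 1) + 3) * w c' :=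
    Finset.sum_le_sum (fun p _ => mul_le_mul_of_nonneg_left (hwmax p) (by positivity))
  have heq : ∑ p ∈ Finset.univ.filter (fun p : Fin r => j ≤ (p : ℕ)),
        (m : ℝ) ^ (2 * r - 2 * ((p : ℕ) + 1) + 3)
      = ∑ l' ∈ Finset.Icc (j + 1) r, (m : ℝ) ^ (2 * r - 2 * l' + 3) :=
    sum_filter_pow hjr (fun n => (m : ℝ) ^ (2 * r - 2 * n + 3))
  rw [← Finset.sum_mul] at hb
  have hPval : Pval r m j k * w c'
      = (∑ p ∈ Finset.univ.filter (fun p : Fin r => j ≤ (p : ℕ)),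
          (m : ℝ) ^ (2 * r - 2 * ((p : ℕ) + 1) + 3)) * w c'
        + (((r - j : ℕ) : ℝ) * m + k) * w c' := by
    rw [Pval, heq]; ring
  linarith


set_option maxHeartbeats 2000000 in
/-- if `t_i` is minimal, then all points of `C_i \ L_r` lie strictly above `S`;
in particular `t_i • e_i ∈ S`. -/
theorem min_axis_above
    (r m : ℕ) (hr : 2 ≤ r) (hm : 2 ≤ m)
    (S : Set (Fin r → ℝ)) (hSA : S ⊆ Apts r m) (hS : Pierced S) (hcard : S.ncard = r)
    (t : ℕ → ℝ) (ht : ∀ l : ℕ, 1 ≤ l → l ≤ r →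
      0 < t l ∧ t l • stdVec r l ∈ convexHull ℝ S)
    (i : ℕ) (hi1 : 1 ≤ i) (hir : i ≤ r)
    (hmin : ∀ l : ℕ, 1 ≤ l → l ≤ r → t i ≤ t l) :
    (∀ x ∈ colorSet r m i \ layerSet r m r,
      1 < ∑ l : Fin r, x l / t ((l : ℕ) + 1)) ∧
    t i • stdVec r i ∈ S := by
  have hfin : S.Finite := Set.finite_of_ncard_ne_zero (by omega)
  -- Step 1: for each l : Fin r, S contains a point of color l+1
  have hexists : ∀ l : Fin r, ∃ x, x ∈ S ∧ ∃ j k : ℕ,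
      (l : ℕ) + 1 ≤ j ∧ j ≤ r ∧ 1 ≤ k ∧ k ≤ m ∧ x = pt r m ((l : ℕ) + 1) j k := by
    intro l
    obtain ⟨htpos, htmem⟩ := ht ((l : ℕ) + 1) (by omega) (by have := l.isLt; omega)
    have hpos : ∃ x ∈ S, 0 < x l := by
      by_contra hcon
      push_neg at hcon
      have hcvx : Convex ℝ {y : Fin r → ℝ | y l ≤ 0} := by
        intro x hx y hy a b ha hb hab
        have : (a • x + b • y) l = a * x l + b * y l := by simp
        simp only [Set.mem_setOf_eq] at hx hy ⊢
        rw [this]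
        nlinarith
      have hsub : convexHull ℝ S ⊆ {y : Fin r → ℝ | y l ≤ 0} :=
        convexHull_min hcon hcvx
      have := hsub htmem
      simp only [Set.mem_setOf_eq, Pi.smul_apply, stdVec, smul_eq_mul] at this
      rw [if_pos trivial, mul_one] at this
      linarith
    obtain ⟨x, hxS, hxl⟩ := hpos
    obtain ⟨c, j, k, hc1, hcj, hjr, hk1, hkm, rfl⟩ := hSA hxS
    have hcl : (l : ℕ) + 1 = c := by
      by_contra hne
      have := pt_offdiag (m := m) (j := j) (k := k) l hne
      linarith
    subst hcl
    exact ⟨_, hxS, j, k, hcj, hjr, hk1, hkm, rfl⟩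
  choose s hsS J K hJ1 hJr hK1 hKm hspt using hexists
  -- injectivity
  have hsinj : Function.Injective s := by
    intro a b hab
    by_contra hne
    have hpos : 0 < s a a := by
      rw [hspt a, pt_diag a rfl]
      exact Pval_pos (hK1 a)
    have hneg : s b a ≤ 0 := by
      rw [hspt b]
      exact pt_offdiag a (fun h => hne (Fin.ext (by omega)))
    rw [hab] at hpos
    linarith
  have hrange : Set.range s = S := by
    apply Set.eq_of_subset_of_ncard_le
    · rintro _ ⟨l, rfl⟩; exact hsS l
    · rw [← Set.image_univ, Set.ncard_image_of_injective _ hsinj, Set.ncard_univ, hcard]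
      simp
    · exact hfin
  -- linear independence
  have hli : LinearIndependent ℝ s := by
    rw [Fintype.linearIndependent_iff]
    intro g hg
    suffices H : ∀ n : ℕ, ∀ l : Fin r, (l : ℕ) < n → g l = 0 by
      intro l; exact H ((l : ℕ) + 1) l (by omega)
    intro n
    induction n with
    | zero => intro l hl; omega
    | succ n ih =>
      intro l hl
      rcases Nat.lt_or_ge (l : ℕ) n with h | h
      · exact ih l h
      have hln : (l : ℕ) = n := by omega
      have hcoord := congrFun hg l
      rw [Finset.sum_apply] at hcoord
      simp only [Pi.smul_apply, smul_eq_mul, Pi.zero_apply] at hcoord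
      have hsingle : ∀ p : Fin r, p ≠ l → g p * s p l = 0 := by
        intro p hp
        by_cases hJp : (l : ℕ) + 1 ≤ J p
        · have : s p l = 0 := by
            rw [hspt p]
            exact pt_zero_of l (fun h => hp (Fin.ext (by omega))) hJp
          rw [this, mul_zero]
        · have hplt : (p : ℕ) < n := by have := hJ1 p; omega
          rw [ih p hplt, zero_mul]
      rw [Finset.sum_eq_single l (fun p _ hp => hsingle p hp) (by simp)] at hcoord
      have hPpos : 0 < s l l := by
        rw [hspt l, pt_diag l rfl]; exact Pval_pos (hK1 l)
      exact (mul_eq_zero.mp hcoord).resolve_right (by linarith)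
  haveI : Nonempty (Fin r) := ⟨⟨0, by omega⟩⟩
  have hcard' : Fintype.card (Fin r) = Module.finrank ℝ (Fin r → ℝ) := by
    rw [Module.finrank_fintype_fun_eq_card, Fintype.card_fin]
  let B := basisOfLinearIndependentOfCardEqFinrank hli hcard'
  let φ : (Fin r → ℝ) →ₗ[ℝ] ℝ := B.constr ℝ (fun _ => (1 : ℝ))
  have hφs : ∀ l, φ (s l) = 1 := by
    intro l
    have hBl : B l = s l := congrFun (coe_basisOfLinearIndependentOfCardEqFinrank hli hcard') l
    rw [← hBl]
    exact B.constr_basis ℝ (fun _ => (1 : ℝ)) l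
  have hφconv : ∀ y ∈ convexHull ℝ S, φ y = 1 := by
    intro y hy
    have hcvx : Convex ℝ {y : Fin r → ℝ | φ y = 1} := by
      intro x hx y hy a b ha hb hab
      simp only [Set.mem_setOf_eq, map_add, map_smul, smul_eq_mul] at hx hy ⊢
      rw [hx, hy]; linarith
    have : convexHull ℝ S ⊆ {y : Fin r → ℝ | φ y = 1} := by
      apply convexHull_min _ hcvx
      intro x hx
      rw [← hrange] at hx
      obtain ⟨l, rfl⟩ := hx
      exact hφs l
    exact this hy
  -- the reciprocal weights
  set w : Fin r → ℝ := fun p => 1 / t ((p : ℕ) + 1) with hw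
  have hwp : ∀ p : Fin r, w p = 1 / t ((p : ℕ) + 1) := fun p => by rw [hw]
  have hφe : ∀ p : Fin r, φ (fun q => if p = q then 1 else 0) = w p := by
    intro p
    have h1 : 1 ≤ (p : ℕ) + 1 := by omega
    have h2 : (p : ℕ) + 1 ≤ r := p.isLt
    have htp := (ht _ h1 h2).1
    have hmem := (ht _ h1 h2).2
    have h3 := hφconv _ hmem
    rw [map_smul, smul_eq_mul] at h3
    have h4 : stdVec r ((p : ℕ) + 1) = (fun q : Fin r => if p = q then 1 else 0) := by
      funext q
      simp only [stdVec]
      by_cases h : (q : ℕ) + 1 = (p : ℕ) + 1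
      · rw [if_pos h, if_pos (Fin.ext (by omega))]
      · rw [if_neg h, if_neg (fun hh => h (by rw [← hh]))]
    rw [h4] at h3
    rw [hwp p, eq_div_iff (ne_of_gt htp)]
    linear_combination h3
  have hφx : ∀ x : Fin r → ℝ, φ x = ∑ p : Fin r, x p * w p := by
    intro x
    rw [LinearMap.pi_apply_eq_sum_univ φ x]
    exact Finset.sum_congr rfl fun p _ => by rw [smul_eq_mul, hφe p]
  have hwpos : ∀ p : Fin r, 0 < w p := by
    intro p
    rw [hwp p]
    have htp := (ht ((p : ℕ) + 1) (by omega) p.isLt).1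
    positivity
  set i' : Fin r := ⟨i - 1, by omega⟩ with hi'def
  have hii' : (i' : ℕ) + 1 = i := by rw [hi'def]; simp; omega
  have hwi' : w i' = 1 / t i := by rw [hwp i', hii']
  have hwmax : ∀ p : Fin r, w p ≤ w i' := by
    intro p
    rw [hwp p, hwi']
    have htp := (ht ((p : ℕ) + 1) (by omega) p.isLt).1
    have hti := (ht i hi1 hir).1
    exact one_div_le_one_div_of_le hti (hmin ((p : ℕ) + 1) (by omega) p.isLt)
  -- the recursion: φ (s l) = 1 expanded
  have hrec : ∀ l : Fin r, ∑ p : Fin r, pt r m ((l : ℕ) + 1) (J l) (K l) p * w p = 1 := by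
    intro l
    rw [← hφx, ← hspt l]
    exact hφs l
  have hti := (ht i hi1 hir).1
  -- the color-r point has layer r, so t r = K rr ≤ m, hence t i ≤ m
  set rr : Fin r := ⟨r - 1, by omega⟩ with hrrdef
  have hrr1 : (rr : ℕ) + 1 = r := by rw [hrrdef]; simp; omega
  have hJrr : J rr = r := by have h1 := hJ1 rr; have h2 := hJr rr; omega
  have hfil : Finset.univ.filter (fun p : Fin r => r ≤ (p : ℕ)) = ∅ := by
    ext p
    simp only [Finset.mem_filter, Finset.mem_univ, true_and, Finset.notMem_empty, iff_false]
    have := p.isLt; omega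
  have hPvr : ∀ k : ℕ, Pval r m r k = (k : ℝ) := by
    intro k
    unfold Pval
    rw [Finset.Icc_eq_empty (by omega), Finset.sum_empty, Nat.sub_self]
    simp
  have hlayr : ∀ l : Fin r, J l = r → (K l : ℝ) * w l = 1 := by
    intro l hJl
    have h0 := hrec l
    rw [sum_pt_mul w l rfl (hJ1 l), hJl, hfil, Finset.sum_empty, sub_zero, hPvr] at h0
    exact h0
  have hKrrw : (K rr : ℝ) * w rr = 1 := hlayr rr hJrr
  have htr : t r = (K rr : ℝ) := by
    have h1 : w rr = 1 / t r := by rw [hwp rr, hrr1]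
    have htrpos := (ht r (by omega) (le_refl r)).1
    rw [h1] at hKrrw
    field_simp at hKrrw
    linarith
  have htim : t i ≤ (m : ℝ) := by
    have h1 := hmin r (by omega) (le_refl r)
    have h2 : (K rr : ℝ) ≤ (m : ℝ) := by exact_mod_cast hKm rr
    linarith [htr ▸ h1]
  -- the minimal color must have layer r
  have hJi : J i' = r := by
    by_contra hne
    have hJlt : J i' < r := lt_of_le_of_ne (hJr i') hne
    have hge := sum_ge (m := m) (k := K i') i' hii' (by have := hJ1 i'; omega) (hJr i') w hwmax
    have h0 := hrec i'
    rw [hii'] at h0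
    rw [h0] at hge
    have hσ : (m : ℝ) + 1 ≤ ((r - J i' : ℕ) : ℝ) * m + (K i' : ℝ) := by
      have h1 : (1 : ℝ) ≤ ((r - J i' : ℕ) : ℝ) := by
        have : 1 ≤ r - J i' := by omega
        exact_mod_cast this
      have h2 : (1 : ℝ) ≤ (K i' : ℝ) := by exact_mod_cast hK1 i'
      have hm0 : (0 : ℝ) ≤ (m : ℝ) := by positivity
      nlinarith
    have hz := hwpos i'
    have hwt : t i * w i' = 1 := by
      rw [hwi']
      field_simp
    nlinarith [mul_le_mul_of_nonneg_right hσ hz.le, mul_le_mul_of_nonneg_right htim hz.le]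
  have hKi : t i = (K i' : ℝ) := by
    have h0 := hlayr i' hJi
    rw [hwi'] at h0
    field_simp at h0
    linarith
  have hmem : t i • stdVec r i ∈ S := by
    have heq : t i • stdVec r i = s i' := by
      rw [hspt i', hii', hJi]
      funext l
      simp only [Pi.smul_apply, stdVec, smul_eq_mul, pt]
      by_cases h : (l : ℕ) + 1 = i
      · rw [if_pos h, if_pos h, mul_one]
        rw [Finset.Icc_eq_empty (by omega), Finset.sum_empty, Nat.sub_self]
        rw [hKi]; push_cast; ring
      · rw [if_neg h, if_neg h, mul_zero]
        rw [if_neg (by have := l.isLt; omega)]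
    rw [heq]
    exact hsS i'
  refine ⟨?_, hmem⟩
  intro x hx
  obtain ⟨hxc, hxl⟩ := hx
  obtain ⟨j, k, _, hij, hjr2, hk1, hkm, rfl⟩ := hxc
  have hjlt : j < r := by
    rcases lt_or_eq_of_le hjr2 with h | h
    · exact h
    · exact absurd (⟨i, k, hi1, h ▸ hij, le_refl r, hk1, hkm, by rw [h]⟩ :
        pt r m i j k ∈ layerSet r m r) hxl
  have hdiv : ∀ l : Fin r, pt r m i j k l / t ((l : ℕ) + 1) = pt r m i j k l * w l := by
    intro l
    rw [hwp l, div_eq_mul_one_div]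
  rw [Finset.sum_congr rfl (fun l _ => hdiv l)]
  have hge := sum_ge (m := m) (k := k) i' hii' hij hjr2 w hwmax
  have hσ : (m : ℝ) + 1 ≤ ((r - j : ℕ) : ℝ) * m + (k : ℝ) := by
    have h1 : (1 : ℝ) ≤ ((r - j : ℕ) : ℝ) := by
      have : 1 ≤ r - j := by omega
      exact_mod_cast this
    have h2 : (1 : ℝ) ≤ (k : ℝ) := by exact_mod_cast hk1
    have hm0 : (0 : ℝ) ≤ (m : ℝ) := by positivity
    nlinarith
  have hz := hwpos i'
  have hwt : t i * w i' = 1 := by rw [hwi']; field_simp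
  nlinarith [mul_le_mul_of_nonneg_right hσ hz.le, mul_le_mul_of_nonneg_right htim hz.le]
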